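/- Let $G$ be a graph of order $n$ with maximum degree $\Delta$ on vertices $v_1, \dots, v_n$, and let $\mathbf{x} = (x_1, \dots, x_n)^T$ be a nonnegative unit eigenvector of the signless Laplacian matrix $Q(G)$ corresponding to its largest eigenvalue $q(G)$. Then $q(G) \le \Delta + n - 1 - 2 \sum x_i x_j$, where the sum ranges over all unordered pairs $\{v_i, v_j\}$ of distinct non-adjacent vertices of $G$. -/

import Mathlib

open SimpleGraph Finset

/-- The book graph `B m = K₂ + complement K_m`: `m` triangles sharing a common edge. -/
def bookGraph (m : ℕ) : SimpleGraph (Fin 2 ⊕ Fin m) where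
  Adj x y := x ≠ y ∧ (x.isLeft ∨ y.isLeft)
  symm := ⟨fun x y h => ⟨h.1.symm, h.2.symm⟩⟩
  loopless := ⟨fun x h => h.1 rfl⟩

/-- `G` contains a copy of `H` as a subgraph, i.e. there is an injective graph
homomorphism from `H` to `G`. -/
def ContainsCopy {α β : Type*} (H : SimpleGraph α) (G : SimpleGraph β) : Prop :=
  ∃ f : H →g G, Function.Injective f

/-- The signless Laplacian spectral radius `q(G)`: the largest eigenvalue of
`Q(G) = D(G) + A(G)`. -/
noncomputable def signlessLapSpectralRadius {n : ℕ} (G : SimpleGraph (Fin n))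
    [DecidableRel G.Adj] : ℝ :=
  sSup (spectrum ℝ (G.degMatrix ℝ + G.adjMatrix ℝ))

theorem stmt_6 (n Δ : ℕ) (G : SimpleGraph (Fin n)) [DecidableRel G.Adj]
    (hmax : G.maxDegree = Δ)
    (x : Fin n → ℝ) (hnn : ∀ i, 0 ≤ x i) (hunit : ∑ i, (x i) ^ 2 = 1)
    (heig : (G.degMatrix ℝ + G.adjMatrix ℝ).mulVec x = signlessLapSpectralRadius G • x) :
    signlessLapSpectralRadius G ≤ (Δ : ℝ) + n - 1 -
      2 * ∑ p ∈ Finset.univ.filter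
        (fun p : Fin n × Fin n => p.1 < p.2 ∧ ¬ G.Adj p.1 p.2), x p.1 * x p.2 := by
  classical
  set q := signlessLapSpectralRadius G with hqdef
  set S := ∑ p ∈ Finset.univ.filter
      (fun p : Fin n × Fin n => p.1 < p.2 ∧ ¬ G.Adj p.1 p.2), x p.1 * x p.2 with hSdef
  -- the quadratic form identity
  have hq : q = ∑ i, (G.degree i : ℝ) * x i ^ 2
      + ∑ i, ∑ j, (if G.Adj i j then x i * x j else 0) := by
    have h1 := congrArg (fun v => ∑ i, x i * v i) heig
    simp only [Matrix.add_mulVec, Pi.add_apply, degMatrix_mulVec_apply,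
      adjMatrix_mulVec_apply, Pi.smul_apply, smul_eq_mul] at h1
    have h2 : ∑ i, x i * (q * x i) = q := by
      simp_rw [show ∀ i, x i * (q * x i) = q * x i ^ 2 by intro i; ring]
      rw [← Finset.mul_sum, hunit, mul_one]
    rw [← h2, ← h1, ← Finset.sum_add_distrib]
    refine Finset.sum_congr rfl fun i _ => ?_
    rw [mul_add, Finset.mul_sum, SimpleGraph.neighborFinset_eq_filter, Finset.sum_filter]
    congr 1
    ring
  -- bound degree term
  have hdeg : ∑ i, (G.degree i : ℝ) * x i ^ 2 ≤ (Δ : ℝ) := by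
    calc ∑ i, (G.degree i : ℝ) * x i ^ 2 ≤ ∑ i, (Δ : ℝ) * x i ^ 2 := by
          apply Finset.sum_le_sum
          intro i _
          have : G.degree i ≤ Δ := hmax ▸ G.degree_le_maxDegree i
          exact mul_le_mul_of_nonneg_right (by exact_mod_cast this) (sq_nonneg _)
      _ = Δ := by rw [← Finset.mul_sum, hunit, mul_one]
  -- the off-diagonal decomposition
  have hsplit : ∀ i j : Fin n, (if i ≠ j then x i * x j else 0) =
      (if G.Adj i j then x i * x j else 0) + (if i ≠ j ∧ ¬ G.Adj i j then x i * x j else 0) := by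
    intro i j
    by_cases hij : i = j
    · subst hij; simp [G.irrefl]
    · by_cases ha : G.Adj i j <;> simp [hij, ha]
  have hofftot : ∑ i, ∑ j, (if i ≠ j then x i * x j else 0) = (∑ i, x i) ^ 2 - 1 := by
    have : ∀ i j : Fin n, (if i ≠ j then x i * x j else 0) =
        x i * x j - (if i = j then x i * x j else 0) := by
      intro i j; by_cases h : i = j <;> simp [h]
    simp_rw [this, Finset.sum_sub_distrib, Finset.sum_ite_eq, Finset.mem_univ, if_true, ← sq]
    rw [← Finset.sum_mul_sum, hunit, ← sq]
  -- nonadjacent ordered sum equals 2S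
  have hlt : ∀ i j : Fin n, (if i ≠ j ∧ ¬ G.Adj i j then x i * x j else 0) =
      (if i < j ∧ ¬ G.Adj i j then x i * x j else 0)
      + (if j < i ∧ ¬ G.Adj i j then x i * x j else 0) := by
    intro i j
    rcases lt_trichotomy i j with h | h | h
    · simp [h, h.ne, h.not_gt]
    · subst h; simp
    · simp [h, h.ne', h.not_gt]
  have hSsum : S = ∑ i, ∑ j, (if i < j ∧ ¬ G.Adj i j then x i * x j else 0) := by
    rw [hSdef, Finset.sum_filter, Fintype.sum_prod_type]
  have hswap : ∑ i, ∑ j, (if j < i ∧ ¬ G.Adj i j then x i * x j else 0)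
      = ∑ i, ∑ j, (if i < j ∧ ¬ G.Adj i j then x i * x j else 0) := by
    rw [Finset.sum_comm]
    congr 1; funext i; congr 1; funext j
    by_cases h : i < j ∧ ¬ G.Adj i j
    · have h' : ¬ G.Adj j i := fun ha => h.2 ha.symm
      simp [h.1, h.2, h', mul_comm]
    · by_cases h1 : i < j
      · have h2 : G.Adj i j := not_not.mp (fun hn => h ⟨h1, hn⟩)
        simp [h1, h2, fun hn : ¬ G.Adj j i => hn h2.symm, h2.symm]
      · simp [h1]
  have hnonadj : ∑ i, ∑ j, (if i ≠ j ∧ ¬ G.Adj i j then x i * x j else 0) = 2 * S := by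
    simp_rw [hlt, Finset.sum_add_distrib]
    rw [hswap, ← hSsum]; ring
  -- Cauchy-Schwarz
  have hcs : (∑ i, x i) ^ 2 ≤ (n : ℝ) := by
    have := sq_sum_le_card_mul_sum_sq (s := (Finset.univ : Finset (Fin n))) (f := x)
    simpa [hunit] using this
  -- combine
  have hadj : ∑ i, ∑ j, (if G.Adj i j then x i * x j else 0)
      = (∑ i, x i) ^ 2 - 1 - 2 * S := by
    have := hofftot
    simp_rw [hsplit, Finset.sum_add_distrib] at this
    rw [hnonadj] at this
    linarith
  rw [hq, hadj]
  linarith
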